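/- For any finite undirected multigraph G, the number of totally cyclic fourientations of G equals the sum, over all orientations α of G, of 2^{|Cyc(α)|}, where Cyc(α) is the set of cyclic arcs of α. -/

import Mathlib

namespace SubgraphsVsOrientations

/-- The four possible configurations of an edge in a fourientation:
`zero` = 0-way, `forward`/`backward` = the two 1-way configurations (relative to
a reference direction of the edge), `two` = 2-way. -/
inductive Four : Type
  | zero | forward | backward | two
deriving DecidableEq

instance instFintypeFour : Fintype Four :=
  ⟨{Four.zero, Four.forward, Four.backward, Four.two}, by intro x; cases x <;> simp⟩

variable {V E : Type*}

/-- Whether configuration `c` allows traversal of the edge in direction `b`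
(`b = true` means from `src` to `tgt`). -/
def allows : Four → Bool → Prop
  | Four.zero, _ => False
  | Four.forward, b => b = true
  | Four.backward, b => b = false
  | Four.two, _ => True

/-- An edge configuration is solid if it is 0-way or 2-way. -/
def IsSolid (c : Four) : Prop := c = Four.zero ∨ c = Four.two

/-- A configuration is 1-way if it is `forward` or `backward`. -/
def IsOneWay (c : Four) : Prop := c = Four.forward ∨ c = Four.backward

/-- Reversing a configuration: swaps the two 1-way configurations,
fixes 0-way and 2-way. -/
def flipFour : Four → Four
  | Four.forward => Four.backward
  | Four.backward => Four.forward
  | c => c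

/-- The 1-way configuration corresponding to direction `b`. -/
def oneWayFour (b : Bool) : Four := if b then Four.forward else Four.backward

/-- Tail of the arc `(e, b)` (the edge `e` traversed in direction `b`). -/
def arcTail (src tgt : E → V) (a : E × Bool) : V := if a.2 then src a.1 else tgt a.1

/-- Head of the arc `(e, b)`. -/
def arcHead (src tgt : E → V) (a : E × Bool) : V := if a.2 then tgt a.1 else src a.1

/-- One-step relation of the digraph `G⃗(A,B;φ)`: there is an arc from `x` to `y`, either
a traversable directed edge of the fourientation `φ`, or an extra arc from `A ∪ B`. -/
def arcStep (src tgt : E → V) (A B : Set (V × V)) (φ : E → Four) (x y : V) : Prop :=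
  (∃ a : E × Bool, allows (φ a.1) a.2 ∧ arcTail src tgt a = x ∧ arcHead src tgt a = y)
    ∨ (x, y) ∈ A ∪ B

/-- Reachability by a directed path in the digraph `G⃗(A,B;φ)`. -/
def reach (src tgt : E → V) (A B : Set (V × V)) (φ : E → Four) : V → V → Prop :=
  Relation.ReflTransGen (arcStep src tgt A B φ)

/-- A fourientation `φ` is `(A,B)`-valid: in `G⃗(A,B;φ)`, for every `(u,v) ∈ A` the vertex `v`
cannot reach `u`, and for every `(u,v) ∈ B` the vertex `v` can reach `u`. -/
def IsValid (src tgt : E → V) (A B : Set (V × V)) (φ : E → Four) : Prop :=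
  (∀ p ∈ A, ¬ reach src tgt A B φ p.2 p.1) ∧ (∀ p ∈ B, reach src tgt A B φ p.2 p.1)

/-- The set of solid edges of a fourientation. -/
def solidSet (φ : E → Four) : Set E := {e | IsSolid (φ e)}

/-- The fourientation associated to an orientation `σ : E → Bool` (every edge 1-way). -/
def toFour (σ : E → Bool) : E → Four := fun e => oneWayFour (σ e)

open Classical in
/-- The fourientation associated to a (spanning) subgraph `F ⊆ E`: edges of `F` are 2-way,
the other edges are 0-way. -/
noncomputable def toFourSub (F : Set E) : E → Four :=
  fun e => if e ∈ F then Four.two else Four.zero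

/-- The arc `(e,b)` is the arc of a 1-way edge of `φ`. -/
def oneWayArc (φ : E → Four) (a : E × Bool) : Prop := φ a.1 = oneWayFour a.2

/-- `Cyc(φ)`: the set of cyclic 1-way edges (arcs) of the fourientation `φ`, in the digraph
`G⃗(A,B;φ)`: the head of the arc can reach its tail. -/
def CycSet (src tgt : E → V) (A B : Set (V × V)) (φ : E → Four) : Set (E × Bool) :=
  {a | oneWayArc φ a ∧ reach src tgt A B φ (arcHead src tgt a) (arcTail src tgt a)}

/-- `Acy(φ)`: the set of acyclic 1-way edges (arcs) of the fourientation `φ`. -/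
def AcySet (src tgt : E → V) (A B : Set (V × V)) (φ : E → Four) : Set (E × Bool) :=
  {a | oneWayArc φ a ∧ ¬ reach src tgt A B φ (arcHead src tgt a) (arcTail src tgt a)}

/-- `l` is (the arc sequence of) a directed cycle: a nonempty closed chain of arcs
visiting no vertex twice. -/
def IsDirCycle (src tgt : E → V) (l : List (E × Bool)) : Prop :=
  ∃ h : l ≠ [],
    l.Chain' (fun a b => arcHead src tgt a = arcTail src tgt b) ∧
    arcHead src tgt (l.getLast h) = arcTail src tgt (l.head h) ∧
    (l.map (arcTail src tgt)).Nodup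

/-- Reversing the directed cycle `l` in the fourientation `φ`: all 1-way edges on the cycle are
reversed, other edges (in particular 2-way edges of the cycle) are unchanged. -/
def revCyc [DecidableEq E] (φ : E → Four) (l : List (E × Bool)) : E → Four :=
  fun e => if (e, true) ∈ l ∨ (e, false) ∈ l then flipFour (φ e) else φ e

/-- One cycle-reversal move: `ψ` is obtained from `φ` by reversing a directed cycle of `φ`. -/
def CycleStep (src tgt : E → V) [DecidableEq E] (φ ψ : E → Four) : Prop :=
  ∃ l, IsDirCycle src tgt l ∧ (∀ a ∈ l, allows (φ a.1) a.2) ∧ ψ = revCyc φ l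

/-- The edge `e` crosses the cut given by `V1` (in either direction). -/
def edgeCrosses (src tgt : E → V) (V1 : Set V) (e : E) : Prop :=
  (src e ∈ V1 ∧ tgt e ∉ V1) ∨ (tgt e ∈ V1 ∧ src e ∉ V1)

/-- The cut `V1 / V1ᶜ` defines a directed `(A,B)`-cocycle of `G⃗(A,B;φ)`: the set of arcs from
`V1` to `V1ᶜ` is nonempty, no arc of the digraph goes from `V1ᶜ` to `V1`, and no arc of
`A ∪ B` crosses the cut (in either direction). -/
def IsABCocycleCut (src tgt : E → V) (A B : Set (V × V)) (φ : E → Four) (V1 : Set V) : Prop :=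
  (∃ a : E × Bool, allows (φ a.1) a.2 ∧ arcTail src tgt a ∈ V1 ∧ arcHead src tgt a ∉ V1) ∧
  (∀ a : E × Bool, allows (φ a.1) a.2 → ¬ (arcTail src tgt a ∉ V1 ∧ arcHead src tgt a ∈ V1)) ∧
  (∀ p ∈ A ∪ B, ((p : V × V).1 ∈ V1 ↔ p.2 ∈ V1))

open Classical in
/-- Reversing the directed cocycle given by the cut `V1`: all 1-way edges crossing the cut are
reversed, other edges (in particular 0-way edges crossing the cut) are unchanged. -/
noncomputable def revCut (src tgt : E → V) (φ : E → Four) (V1 : Set V) : E → Four :=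
  fun e => if edgeCrosses src tgt V1 e then flipFour (φ e) else φ e

/-- One cocycle-reversal move: `ψ` is obtained from `φ` by reversing a directed
`(A,B)`-cocycle of `φ`. -/
def CocycleStep (src tgt : E → V) (A B : Set (V × V)) (φ ψ : E → Four) : Prop :=
  ∃ V1 : Set V, IsABCocycleCut src tgt A B φ V1 ∧ ψ = revCut src tgt φ V1

/-- One cycle- or cocycle-reversal move. -/
def CCStep (src tgt : E → V) (A B : Set (V × V)) [DecidableEq E] (φ ψ : E → Four) : Prop :=
  CycleStep src tgt φ ψ ∨ CocycleStep src tgt A B φ ψ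

/-- `φ` contains no cycle (of the graph `G`) made entirely of 2-way edges. -/
def NoTwoWayCycle (src tgt : E → V) (φ : E → Four) : Prop :=
  ¬ ∃ l : List (E × Bool), IsDirCycle src tgt l ∧ (l.map Prod.fst).Nodup ∧
      ∀ a ∈ l, φ a.1 = Four.two

/-- `φ` contains no `(A,B)`-cocycle (of the graph `G`) made entirely of 0-way edges:
there is no cut, not crossed by any arc of `A ∪ B`, crossed by at least one edge of `G`,
all of whose crossing edges are 0-way. -/
def NoZeroWayCocycle (src tgt : E → V) (A B : Set (V × V)) (φ : E → Four) : Prop :=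
  ¬ ∃ V1 : Set V, (∃ e, edgeCrosses src tgt V1 e) ∧
      (∀ e, edgeCrosses src tgt V1 e → φ e = Four.zero) ∧
      (∀ p ∈ A ∪ B, ((p : V × V).1 ∈ V1 ↔ p.2 ∈ V1))

/-- The subgraph `F` contains no cycle (it is a forest). -/
def NoCycleIn (src tgt : E → V) (F : Set E) : Prop :=
  ¬ ∃ l : List (E × Bool), IsDirCycle src tgt l ∧ (l.map Prod.fst).Nodup ∧ ∀ a ∈ l, a.1 ∈ F

/-- One undirected adjacency step in the graph `F ∪ A̲ ∪ B̲`. -/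
def usym (src tgt : E → V) (A B : Set (V × V)) (F : Set E) (x y : V) : Prop :=
  (∃ e ∈ F, (src e = x ∧ tgt e = y) ∨ (src e = y ∧ tgt e = x)) ∨
  (∃ p ∈ A ∪ B, ((p : V × V) = (x, y) ∨ p = (y, x)))

/-- Connectivity (by undirected paths) in the graph `F ∪ A̲ ∪ B̲`. -/
def ureach (src tgt : E → V) (A B : Set (V × V)) (F : Set E) : V → V → Prop :=
  Relation.ReflTransGen (usym src tgt A B F)

/-- The subgraph `F` is `(A,B)`-connected: the connected components of `F ∪ A̲ ∪ B̲`
coincide with those of `G ∪ A̲ ∪ B̲`. -/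
def ABConnected (src tgt : E → V) (A B : Set (V × V)) (F : Set E) : Prop :=
  ∀ x y, ureach src tgt A B F x y ↔ ureach src tgt A B Set.univ x y


section Aux

variable {V : Type*}

lemma arcStep_iff {E : Type*} (src tgt : E → V) (A : Set (V × V)) (φ : E → Four) (x y : V) :
    arcStep src tgt A ∅ φ x y ↔
      (∃ a : E × Bool, allows (φ a.1) a.2 ∧ arcTail src tgt a = x ∧ arcHead src tgt a = y)
        ∨ (x, y) ∈ A := by
  simp [arcStep]

lemma reach_mono {E : Type*} {src tgt : E → V} {A B : Set (V × V)} (h : A ⊆ B)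
    {φ : E → Four} {x y : V} (hr : reach src tgt A ∅ φ x y) : reach src tgt B ∅ φ x y := by
  refine Relation.ReflTransGen.mono ?_ _ _ hr
  intro a b hab
  rcases (arcStep_iff src tgt A φ a b).1 hab with h1 | h1
  · exact (arcStep_iff src tgt B φ a b).2 (Or.inl h1)
  · exact (arcStep_iff src tgt B φ a b).2 (Or.inr (h h1))

lemma reach_insert_iff {E : Type*} (src tgt : E → V) (A : Set (V × V)) (u v : V)
    (φ : E → Four) (x y : V) :
    reach src tgt (insert (u, v) A) ∅ φ x y ↔
      reach src tgt A ∅ φ x y ∨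
        (reach src tgt A ∅ φ x u ∧ reach src tgt A ∅ φ v y) := by
  constructor
  · intro h
    induction h with
    | refl => exact Or.inl Relation.ReflTransGen.refl
    | @tail z w h1 h2 ih =>
      rcases (arcStep_iff src tgt _ φ z w).1 h2 with he | hA
      · have hstep : arcStep src tgt A ∅ φ z w :=
          (arcStep_iff src tgt A φ z w).2 (Or.inl he)
        rcases ih with h | ⟨hxu, hvz⟩
        · exact Or.inl (h.tail hstep)
        · exact Or.inr ⟨hxu, hvz.tail hstep⟩
      · rcases Set.mem_insert_iff.1 hA with h1' | h1'
        · obtain ⟨hz, hw⟩ : z = u ∧ w = v := Prod.mk.injEq .. ▸ h1'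
          subst hz; subst hw
          rcases ih with h | ⟨hxu, _⟩
          · exact Or.inr ⟨h, Relation.ReflTransGen.refl⟩
          · exact Or.inr ⟨hxu, Relation.ReflTransGen.refl⟩
        · have hstep : arcStep src tgt A ∅ φ z w :=
            (arcStep_iff src tgt A φ z w).2 (Or.inr h1')
          rcases ih with h | ⟨hxu, hvz⟩
          · exact Or.inl (h.tail hstep)
          · exact Or.inr ⟨hxu, hvz.tail hstep⟩
  · rintro (h | ⟨hxu, hvy⟩)
    · exact reach_mono (Set.subset_insert _ _) h
    · refine Relation.ReflTransGen.trans (reach_mono (Set.subset_insert _ _) hxu) ?_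
      refine Relation.ReflTransGen.head ?_ (reach_mono (Set.subset_insert _ _) hvy)
      exact (arcStep_iff src tgt _ φ u v).2 (Or.inr (Set.mem_insert _ _))

lemma reach_insert_of_reach {E : Type*} {src tgt : E → V} {A : Set (V × V)} {u v : V}
    {φ : E → Four} (huv : reach src tgt A ∅ φ u v) (x y : V) :
    reach src tgt (insert (u, v) A) ∅ φ x y ↔ reach src tgt A ∅ φ x y := by
  rw [reach_insert_iff]
  constructor
  · rintro (h | ⟨hxu, hvy⟩)
    · exact h
    · exact (hxu.trans huv).trans hvy
  · exact Or.inl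

end Aux
section Aux2

variable {V : Type*}

lemma reach_refl {E : Type*} {src tgt : E → V} {A : Set (V × V)} {φ : E → Four} (x : V) :
    reach src tgt A ∅ φ x x := Relation.ReflTransGen.refl

lemma reach_ins_one {E : Type*} {src tgt : E → V} {A : Set (V × V)} {u v : V}
    {φ : E → Four} {x y : V} (h2 : ¬ reach src tgt A ∅ φ v u)
    (hyx : reach src tgt A ∅ φ y x) :
    reach src tgt (insert (u, v) A) ∅ φ x y ↔ reach src tgt A ∅ φ x y := by
  rw [reach_insert_iff]
  constructor
  · rintro (h | ⟨hxu, hvy⟩)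
    · exact h
    · exact absurd ((hvy.trans hyx).trans hxu) h2
  · exact Or.inl

lemma reach_ins_two {E : Type*} {src tgt : E → V} {A : Set (V × V)} {u v : V}
    {φ : E → Four} {x y : V} (h1 : ¬ reach src tgt A ∅ φ u v)
    (h2 : ¬ reach src tgt A ∅ φ v u) (hyx : reach src tgt A ∅ φ y x) :
    reach src tgt (insert (u, v) (insert (v, u) A)) ∅ φ x y ↔ reach src tgt A ∅ φ x y := by
  rw [reach_insert_iff, reach_insert_iff, reach_insert_iff, reach_insert_iff]
  constructor
  · rintro ((h | ⟨hxv, huy⟩) | ⟨(hxu | ⟨hxv, -⟩), (hvy | ⟨-, huy⟩)⟩)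
    · exact h
    · exact absurd ((huy.trans hyx).trans hxv) h1
    · exact absurd ((hvy.trans hyx).trans hxu) h2
    · exact hxu.trans huy
    · exact hxv.trans hvy
    · exact absurd ((huy.trans hyx).trans hxv) h1
  · intro h
    exact Or.inl (Or.inl h)
end Aux2
section Aux3

variable {V : Type*}

/-- Totally cyclic w.r.t. free arcs `A`. -/
def TCp {E : Type*} (src tgt : E → V) (A : Set (V × V)) (φ : E → Four) : Prop :=
  ∀ a : E × Bool, oneWayArc φ a →
    reach src tgt A ∅ φ (arcHead src tgt a) (arcTail src tgt a)

/-- Reachability demands from a pair set `P`. -/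
def Pcond {E : Type*} (src tgt : E → V) (A : Set (V × V)) (P : Set (V × V))
    (φ : E → Four) : Prop :=
  ∀ p ∈ P, reach src tgt A ∅ φ p.1 p.2

open Classical in
/-- The weighted contribution of an orientation. -/
noncomputable def cycQ {E : Type*} (src tgt : E → V) (A P : Set (V × V))
    (σ : E → Bool) : ℕ :=
  2 ^ (CycSet src tgt A ∅ (toFour σ)).ncard *
    (if Pcond src tgt A P (toFour σ) then 1 else 0)

lemma allows_oneWayFour (b : Bool) : allows (oneWayFour b) b := by
  cases b <;> simp [allows, oneWayFour]

lemma step_of_arc {E : Type*} (src tgt : E → V) (A : Set (V × V)) {φ : E → Four}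
    {a : E × Bool} (h : allows (φ a.1) a.2) :
    reach src tgt A ∅ φ (arcTail src tgt a) (arcHead src tgt a) :=
  Relation.ReflTransGen.single ((arcStep_iff src tgt A φ _ _).2 (Or.inl ⟨a, h, rfl, rfl⟩))

lemma step_of_memA {E : Type*} (src tgt : E → V) {A : Set (V × V)} (φ : E → Four)
    {x y : V} (h : (x, y) ∈ A) : reach src tgt A ∅ φ x y :=
  Relation.ReflTransGen.single ((arcStep_iff src tgt A φ _ _).2 (Or.inr h))

lemma cycSet_congr {E : Type*} {src tgt : E → V} {A A' : Set (V × V)} {φ : E → Four}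
    (h : ∀ x y, reach src tgt A ∅ φ x y ↔ reach src tgt A' ∅ φ x y) :
    CycSet src tgt A ∅ φ = CycSet src tgt A' ∅ φ :=
  Set.ext fun a => and_congr_right fun _ => h _ _

lemma Pcond_congr {E : Type*} {src tgt : E → V} {A A' : Set (V × V)} {P : Set (V × V)}
    {φ : E → Four} (h : ∀ x y, reach src tgt A ∅ φ x y ↔ reach src tgt A' ∅ φ x y) :
    Pcond src tgt A P φ ↔ Pcond src tgt A' P φ :=
  forall₂_congr fun p _ => h _ _

lemma cycQ_congr {E : Type*} {src tgt : E → V} {A A' : Set (V × V)} {P : Set (V × V)}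
    {σ : E → Bool} (h : ∀ x y,
      reach src tgt A ∅ (toFour σ) x y ↔ reach src tgt A' ∅ (toFour σ) x y) :
    cycQ src tgt A P σ = cycQ src tgt A' P σ := by
  classical
  unfold cycQ
  rw [cycSet_congr h]
  congr 1
  exact if_congr (Pcond_congr (P := P) h) rfl rfl

/-- The key per-orientation exchange identity. -/
lemma cycQ_exchange {E : Type*} (src tgt : E → V) (A P : Set (V × V))
    (hP : ∀ p ∈ P, (p.2, p.1) ∈ A) (u v : V) (σ : E → Bool) :
    cycQ src tgt A P σ + cycQ src tgt (insert (u, v) (insert (v, u) A)) P σ =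
    cycQ src tgt (insert (u, v) A) P σ + cycQ src tgt (insert (v, u) A) P σ := by
  set φ := toFour σ with hφ
  by_cases h1 : reach src tgt A ∅ φ u v <;> by_cases h2 : reach src tgt A ∅ φ v u
  · -- both reachable: all four sets give the same reach
    have e1 : ∀ x y, reach src tgt (insert (u, v) A) ∅ φ x y ↔ reach src tgt A ∅ φ x y :=
      fun x y => reach_insert_of_reach h1 x y
    have e2 : ∀ x y, reach src tgt (insert (v, u) A) ∅ φ x y ↔ reach src tgt A ∅ φ x y :=
      fun x y => reach_insert_of_reach h2 x y
    have e3 : ∀ x y, reach src tgt (insert (u, v) (insert (v, u) A)) ∅ φ x y ↔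
        reach src tgt A ∅ φ x y := fun x y => by
      rw [reach_insert_of_reach (reach_mono (Set.subset_insert _ _) h1), e2]
    rw [cycQ_congr (fun x y => (e1 x y)), cycQ_congr (fun x y => (e2 x y)),
      cycQ_congr (fun x y => (e3 x y))]
  · -- u ⇝ v only
    have e1 : ∀ x y, reach src tgt (insert (u, v) A) ∅ φ x y ↔ reach src tgt A ∅ φ x y :=
      fun x y => reach_insert_of_reach h1 x y
    have e3 : ∀ x y, reach src tgt (insert (u, v) (insert (v, u) A)) ∅ φ x y ↔
        reach src tgt (insert (v, u) A) ∅ φ x y :=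
      fun x y => reach_insert_of_reach (reach_mono (Set.subset_insert _ _) h1) x y
    rw [cycQ_congr e1, cycQ_congr e3]
  · -- v ⇝ u only
    have e2 : ∀ x y, reach src tgt (insert (v, u) A) ∅ φ x y ↔ reach src tgt A ∅ φ x y :=
      fun x y => reach_insert_of_reach h2 x y
    have e3 : ∀ x y, reach src tgt (insert (u, v) (insert (v, u) A)) ∅ φ x y ↔
        reach src tgt (insert (u, v) A) ∅ φ x y := fun x y => by
      rw [Set.insert_comm]
      exact reach_insert_of_reach (reach_mono (Set.subset_insert _ _) h2) x y
    rw [cycQ_congr e2, cycQ_congr e3, Nat.add_comm]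
  · -- neither: everything is unchanged on back-linked pairs
    have key : ∀ (A' : Set (V × V)), A ⊆ A' →
        (∀ x y, reach src tgt A' ∅ φ x y ↔ reach src tgt A ∅ φ x y) →
        cycQ src tgt A' P σ = cycQ src tgt A P σ := fun A' _ hiff => cycQ_congr hiff
    have buv : ∀ x y, reach src tgt A ∅ φ y x →
        ((reach src tgt (insert (u, v) A) ∅ φ x y ↔ reach src tgt A ∅ φ x y) ∧
         (reach src tgt (insert (v, u) A) ∅ φ x y ↔ reach src tgt A ∅ φ x y) ∧
         (reach src tgt (insert (u, v) (insert (v, u) A)) ∅ φ x y ↔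
            reach src tgt A ∅ φ x y)) := fun x y hyx =>
      ⟨reach_ins_one h2 hyx, reach_ins_one h1 hyx, reach_ins_two h1 h2 hyx⟩
    -- backlink for arcs of the orientation
    have harc : ∀ a : E × Bool, oneWayArc φ a →
        reach src tgt A ∅ φ (arcTail src tgt a) (arcHead src tgt a) := by
      intro a ha
      have : allows (φ a.1) a.2 := by rw [ha]; exact allows_oneWayFour a.2
      exact step_of_arc src tgt A this
    have hcyc : ∀ (A' : Set (V × V)),
        (∀ x y, reach src tgt A ∅ φ y x →
          (reach src tgt A' ∅ φ x y ↔ reach src tgt A ∅ φ x y)) →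
        CycSet src tgt A' ∅ φ = CycSet src tgt A ∅ φ := by
      intro A' hiff
      ext a
      constructor
      · rintro ⟨h, hr⟩
        exact ⟨h, (hiff _ _ (harc a h)).1 hr⟩
      · rintro ⟨h, hr⟩
        exact ⟨h, (hiff _ _ (harc a h)).2 hr⟩
    have hpc : ∀ (A' : Set (V × V)),
        (∀ x y, reach src tgt A ∅ φ y x →
          (reach src tgt A' ∅ φ x y ↔ reach src tgt A ∅ φ x y)) →
        (Pcond src tgt A' P φ ↔ Pcond src tgt A P φ) := by
      intro A' hiff
      refine forall₂_congr fun p hp => ?_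
      exact hiff _ _ (step_of_memA src tgt φ (hP p hp))
    have heq : ∀ (A' : Set (V × V)),
        (∀ x y, reach src tgt A ∅ φ y x →
          (reach src tgt A' ∅ φ x y ↔ reach src tgt A ∅ φ x y)) →
        cycQ src tgt A' P σ = cycQ src tgt A P σ := by
      intro A' hiff
      classical
      unfold cycQ
      rw [← hφ, hcyc A' hiff]
      congr 1
      exact if_congr (hpc A' hiff) rfl rfl
    rw [heq _ (fun x y hyx => (buv x y hyx).1), heq _ (fun x y hyx => (buv x y hyx).2.1),
      heq _ (fun x y hyx => (buv x y hyx).2.2)]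

end Aux3
section Aux4

variable {V : Type*} {E : Type*} [DecidableEq E]

/-- Extend a fourientation of `E ∖ {e0}` by a value at `e0`. -/
def ext4 (e0 : E) (c : Four) (φ' : {e : E // e ≠ e0} → Four) : E → Four :=
  fun e => if h : e = e0 then c else φ' ⟨e, h⟩

def ext2 (e0 : E) (b : Bool) (σ' : {e : E // e ≠ e0} → Bool) : E → Bool :=
  fun e => if h : e = e0 then b else σ' ⟨e, h⟩

/-- Restriction of an edge-indexed map to the complement of `e0`. -/
def rmap (f : E → V) (e0 : E) : {e : E // e ≠ e0} → V := fun e => f e.1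

/-- The free arcs to add when removing an edge with configuration `c`. -/
def addc (u v : V) (A : Set (V × V)) : Four → Set (V × V)
  | Four.zero => A
  | Four.forward => insert (u, v) A
  | Four.backward => insert (v, u) A
  | Four.two => insert (u, v) (insert (v, u) A)

lemma subset_addc (u v : V) (A : Set (V × V)) (c : Four) : A ⊆ addc u v A c := by
  cases c
  · exact subset_rfl
  · exact Set.subset_insert _ _
  · exact Set.subset_insert _ _
  · exact (Set.subset_insert _ _).trans (Set.subset_insert _ _)

lemma ext4_e0 (e0 : E) (c : Four) (φ' : {e : E // e ≠ e0} → Four) :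
    ext4 e0 c φ' e0 = c := dif_pos rfl

lemma ext4_ne (e0 : E) (c : Four) (φ' : {e : E // e ≠ e0} → Four) {e : E} (h : e ≠ e0) :
    ext4 e0 c φ' e = φ' ⟨e, h⟩ := dif_neg h

lemma toFour_ext2 (e0 : E) (b : Bool) (σ' : {e : E // e ≠ e0} → Bool) :
    toFour (ext2 e0 b σ') = ext4 e0 (oneWayFour b) (toFour σ') := by
  funext e
  unfold toFour ext2 ext4
  by_cases h : e = e0 <;> simp [h]

lemma arcTail_rmap (src tgt : E → V) (e0 : E) (a : {e : E // e ≠ e0} × Bool) :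
    arcTail (rmap src e0) (rmap tgt e0) a = arcTail src tgt (a.1.1, a.2) := rfl

lemma arcHead_rmap (src tgt : E → V) (e0 : E) (a : {e : E // e ≠ e0} × Bool) :
    arcHead (rmap src e0) (rmap tgt e0) a = arcHead src tgt (a.1.1, a.2) := rfl

lemma arcStep_ext (src tgt : E → V) (A : Set (V × V)) (e0 : E) (c : Four)
    (φ' : {e : E // e ≠ e0} → Four) (x y : V) :
    arcStep src tgt A ∅ (ext4 e0 c φ') x y ↔
      arcStep (rmap src e0) (rmap tgt e0) (addc (src e0) (tgt e0) A c) ∅ φ' x y := by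
  rw [arcStep_iff, arcStep_iff]
  constructor
  · rintro (⟨⟨e, b⟩, hall, ht, hh⟩ | hA)
    · by_cases h : e = e0
      · subst h
        rw [ext4_e0] at hall
        subst ht; subst hh
        refine Or.inr ?_
        cases c with
        | zero => exact absurd hall id
        | forward =>
          have hb : b = true := hall
          subst hb
          exact Set.mem_insert _ _
        | backward =>
          have hb : b = false := hall
          subst hb
          exact Set.mem_insert _ _
        | two =>
          cases b with
          | true => exact Set.mem_insert _ _
          | false => exact Set.mem_insert_of_mem _ (Set.mem_insert _ _)
      · rw [ext4_ne e0 c φ' h] at hall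
        exact Or.inl ⟨(⟨e, h⟩, b), hall, ht, hh⟩
    · exact Or.inr (subset_addc _ _ A c hA)
  · rintro (⟨⟨⟨e, he⟩, b⟩, hall, ht, hh⟩ | hA)
    · refine Or.inl ⟨(e, b), ?_, ht, hh⟩
      rw [ext4_ne e0 c φ' he]
      exact hall
    · cases c with
      | zero => exact Or.inr hA
      | forward =>
        rcases Set.mem_insert_iff.1 hA with h | h
        · obtain ⟨hx, hy⟩ : x = src e0 ∧ y = tgt e0 := Prod.mk.injEq .. ▸ h
          subst hx; subst hy
          exact Or.inl ⟨(e0, true), by rw [ext4_e0]; exact rfl, rfl, rfl⟩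
        · exact Or.inr h
      | backward =>
        rcases Set.mem_insert_iff.1 hA with h | h
        · obtain ⟨hx, hy⟩ : x = tgt e0 ∧ y = src e0 := Prod.mk.injEq .. ▸ h
          subst hx; subst hy
          exact Or.inl ⟨(e0, false), by rw [ext4_e0]; exact rfl, rfl, rfl⟩
        · exact Or.inr h
      | two =>
        rcases Set.mem_insert_iff.1 hA with h | h
        · obtain ⟨hx, hy⟩ : x = src e0 ∧ y = tgt e0 := Prod.mk.injEq .. ▸ h
          subst hx; subst hy
          exact Or.inl ⟨(e0, true), by rw [ext4_e0]; exact trivial, rfl, rfl⟩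
        rcases Set.mem_insert_iff.1 h with h' | h'
        · obtain ⟨hx, hy⟩ : x = tgt e0 ∧ y = src e0 := Prod.mk.injEq .. ▸ h'
          subst hx; subst hy
          exact Or.inl ⟨(e0, false), by rw [ext4_e0]; exact trivial, rfl, rfl⟩
        · exact Or.inr h'

lemma reach_ext (src tgt : E → V) (A : Set (V × V)) (e0 : E) (c : Four)
    (φ' : {e : E // e ≠ e0} → Four) (x y : V) :
    reach src tgt A ∅ (ext4 e0 c φ') x y ↔
      reach (rmap src e0) (rmap tgt e0) (addc (src e0) (tgt e0) A c) ∅ φ' x y := by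
  constructor
  · intro h
    exact Relation.ReflTransGen.mono (fun a b hab => (arcStep_ext src tgt A e0 c φ' a b).1 hab) _ _ h
  · intro h
    exact Relation.ReflTransGen.mono (fun a b hab => (arcStep_ext src tgt A e0 c φ' a b).2 hab) _ _ h

lemma oneWayFour_ne_zero (b : Bool) : Four.zero ≠ oneWayFour b := by
  cases b <;> simp [oneWayFour]

lemma oneWayFour_ne_two (b : Bool) : Four.two ≠ oneWayFour b := by
  cases b <;> simp [oneWayFour]

lemma forward_eq_oneWayFour (b : Bool) : Four.forward = oneWayFour b ↔ b = true := by
  cases b <;> simp [oneWayFour]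

lemma backward_eq_oneWayFour (b : Bool) : Four.backward = oneWayFour b ↔ b = false := by
  cases b <;> simp [oneWayFour]

lemma oneWayArc_ext_e0 (e0 : E) (c : Four) (φ' : {e : E // e ≠ e0} → Four) (b : Bool) :
    oneWayArc (ext4 e0 c φ') (e0, b) ↔ c = oneWayFour b := by
  unfold oneWayArc
  rw [ext4_e0]

lemma oneWayArc_ext_ne (e0 : E) (c : Four) (φ' : {e : E // e ≠ e0} → Four) {e : E}
    (h : e ≠ e0) (b : Bool) :
    oneWayArc (ext4 e0 c φ') (e, b) ↔ oneWayArc φ' (⟨e, h⟩, b) := by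
  unfold oneWayArc
  rw [ext4_ne e0 c φ' h]

end Aux4
section Aux5

variable {V : Type*} {E : Type*} [DecidableEq E]

lemma Pcond_ext (src tgt : E → V) (A P : Set (V × V)) (e0 : E) (c : Four)
    (φ' : {e : E // e ≠ e0} → Four) :
    Pcond src tgt A P (ext4 e0 c φ') ↔
      Pcond (rmap src e0) (rmap tgt e0) (addc (src e0) (tgt e0) A c) P φ' :=
  forall₂_congr fun p _ => reach_ext src tgt A e0 c φ' p.1 p.2

lemma TCp_ext_zero (src tgt : E → V) (A : Set (V × V)) (e0 : E)
    (φ' : {e : E // e ≠ e0} → Four) :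
    TCp src tgt A (ext4 e0 Four.zero φ') ↔ TCp (rmap src e0) (rmap tgt e0) A φ' := by
  have hr := reach_ext src tgt A e0 Four.zero φ'
  constructor
  · intro h a ha
    have := h (a.1.1, a.2) ((oneWayArc_ext_ne e0 _ φ' a.1.2 a.2).2 (by
      cases a with | mk a1 a2 => exact ha))
    rw [← arcHead_rmap src tgt e0 a, ← arcTail_rmap src tgt e0 a] at *
    exact (hr _ _).1 this
  · intro h a ha
    obtain ⟨e, b⟩ := a
    by_cases he : e = e0
    · subst he
      exact absurd ((oneWayArc_ext_e0 _ _ φ' b).1 ha) (oneWayFour_ne_zero b)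
    · have := h (⟨e, he⟩, b) ((oneWayArc_ext_ne e0 _ φ' he b).1 ha)
      exact (hr _ _).2 this

lemma TCp_ext_two (src tgt : E → V) (A : Set (V × V)) (e0 : E)
    (φ' : {e : E // e ≠ e0} → Four) :
    TCp src tgt A (ext4 e0 Four.two φ') ↔
      TCp (rmap src e0) (rmap tgt e0)
        (insert (src e0, tgt e0) (insert (tgt e0, src e0) A)) φ' := by
  have hr := reach_ext src tgt A e0 Four.two φ'
  constructor
  · intro h a ha
    have := h (a.1.1, a.2) ((oneWayArc_ext_ne e0 _ φ' a.1.2 a.2).2 (by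
      cases a with | mk a1 a2 => exact ha))
    exact (hr _ _).1 this
  · intro h a ha
    obtain ⟨e, b⟩ := a
    by_cases he : e = e0
    · subst he
      exact absurd ((oneWayArc_ext_e0 _ _ φ' b).1 ha) (oneWayFour_ne_two b)
    · have := h (⟨e, he⟩, b) ((oneWayArc_ext_ne e0 _ φ' he b).1 ha)
      exact (hr _ _).2 this

lemma TCp_ext_forward (src tgt : E → V) (A : Set (V × V)) (e0 : E)
    (φ' : {e : E // e ≠ e0} → Four) :
    TCp src tgt A (ext4 e0 Four.forward φ') ↔
      (TCp (rmap src e0) (rmap tgt e0) (insert (src e0, tgt e0) A) φ' ∧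
        reach (rmap src e0) (rmap tgt e0) (insert (src e0, tgt e0) A) ∅ φ'
          (tgt e0) (src e0)) := by
  have hr := reach_ext src tgt A e0 Four.forward φ'
  constructor
  · intro h
    constructor
    · intro a ha
      have := h (a.1.1, a.2) ((oneWayArc_ext_ne e0 _ φ' a.1.2 a.2).2 (by
        cases a with | mk a1 a2 => exact ha))
      exact (hr _ _).1 this
    · have := h (e0, true) ((oneWayArc_ext_e0 e0 _ φ' true).2 rfl)
      exact (hr _ _).1 this
  · rintro ⟨h, hcy⟩ a ha
    obtain ⟨e, b⟩ := a
    by_cases he : e = e0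
    · subst he
      have hb : b = true := (forward_eq_oneWayFour b).1 ((oneWayArc_ext_e0 _ _ φ' b).1 ha)
      subst hb
      exact (hr _ _).2 hcy
    · have := h (⟨e, he⟩, b) ((oneWayArc_ext_ne e0 _ φ' he b).1 ha)
      exact (hr _ _).2 this

lemma TCp_ext_backward (src tgt : E → V) (A : Set (V × V)) (e0 : E)
    (φ' : {e : E // e ≠ e0} → Four) :
    TCp src tgt A (ext4 e0 Four.backward φ') ↔
      (TCp (rmap src e0) (rmap tgt e0) (insert (tgt e0, src e0) A) φ' ∧
        reach (rmap src e0) (rmap tgt e0) (insert (tgt e0, src e0) A) ∅ φ'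
          (src e0) (tgt e0)) := by
  have hr := reach_ext src tgt A e0 Four.backward φ'
  constructor
  · intro h
    constructor
    · intro a ha
      have := h (a.1.1, a.2) ((oneWayArc_ext_ne e0 _ φ' a.1.2 a.2).2 (by
        cases a with | mk a1 a2 => exact ha))
      exact (hr _ _).1 this
    · have := h (e0, false) ((oneWayArc_ext_e0 e0 _ φ' false).2 rfl)
      exact (hr _ _).1 this
  · rintro ⟨h, hcy⟩ a ha
    obtain ⟨e, b⟩ := a
    by_cases he : e = e0
    · subst he
      have hb : b = false := (backward_eq_oneWayFour b).1 ((oneWayArc_ext_e0 _ _ φ' b).1 ha)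
      subst hb
      exact (hr _ _).2 hcy
    · have := h (⟨e, he⟩, b) ((oneWayArc_ext_ne e0 _ φ' he b).1 ha)
      exact (hr _ _).2 this

end Aux5
section Aux6

variable {V : Type*} {E : Type*} [DecidableEq E]

lemma oneWayFour_inj {b b' : Bool} : oneWayFour b = oneWayFour b' ↔ b = b' := by
  cases b <;> cases b' <;> simp [oneWayFour]

open Classical in
lemma cycSet_ext (src tgt : E → V) (A : Set (V × V)) (e0 : E) (b : Bool)
    (σ' : {e : E // e ≠ e0} → Bool) :
    CycSet src tgt A ∅ (toFour (ext2 e0 b σ')) =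
      (fun a : {e : E // e ≠ e0} × Bool => ((a.1.1 : E), a.2)) ''
        CycSet (rmap src e0) (rmap tgt e0) (addc (src e0) (tgt e0) A (oneWayFour b)) ∅
          (toFour σ') ∪
      (if reach (rmap src e0) (rmap tgt e0) (addc (src e0) (tgt e0) A (oneWayFour b)) ∅
            (toFour σ') (arcHead src tgt (e0, b)) (arcTail src tgt (e0, b))
        then {(e0, b)} else ∅) := by
  rw [toFour_ext2]
  ext a
  obtain ⟨e, β⟩ := a
  simp only [CycSet, Set.mem_setOf_eq, Set.mem_union, Set.mem_image]
  by_cases he : e = e0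
  · subst he
    rw [oneWayArc_ext_e0, oneWayFour_inj]
    constructor
    · rintro ⟨rfl, hr⟩
      refine Or.inr ?_
      rw [if_pos ((reach_ext src tgt A e _ (toFour σ') _ _).1 hr)]
      exact rfl
    · rintro (⟨a', _, hpair⟩ | hmem)
      · exact absurd (congrArg Prod.fst hpair) a'.1.2
      · by_cases hc : reach (rmap src e) (rmap tgt e)
            (addc (src e) (tgt e) A (oneWayFour b)) ∅ (toFour σ')
            (arcHead src tgt (e, b)) (arcTail src tgt (e, b))
        · rw [if_pos hc] at hmem
          obtain ⟨-, hβ⟩ : (e : E) = e ∧ β = b := Prod.mk.injEq .. ▸ hmem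
          subst hβ
          exact ⟨rfl, (reach_ext src tgt A e _ (toFour σ') _ _).2 hc⟩
        · rw [if_neg hc] at hmem
          exact absurd hmem (Set.notMem_empty _)
  · rw [oneWayArc_ext_ne e0 (oneWayFour b) (toFour σ') he β]
    constructor
    · rintro ⟨h1, hr⟩
      exact Or.inl ⟨(⟨e, he⟩, β), ⟨h1, (reach_ext src tgt A e0 _ (toFour σ') _ _).1 hr⟩, rfl⟩
    · rintro (⟨a', ⟨h1, hr⟩, hpair⟩ | hmem)
      · obtain ⟨h11, h12⟩ : (a'.1.1 : E) = e ∧ a'.2 = β := Prod.mk.injEq .. ▸ hpair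
        have ha' : a' = (⟨e, he⟩, β) := by
          cases a' with | mk a1 a2 =>
          cases a1 with | mk a11 a12 =>
          simp only at h11 h12
          subst h11; subst h12; rfl
        rw [ha'] at h1 hr
        exact ⟨h1, (reach_ext src tgt A e0 _ (toFour σ') _ _).2 hr⟩
      · by_cases hc : reach (rmap src e0) (rmap tgt e0)
            (addc (src e0) (tgt e0) A (oneWayFour b)) ∅ (toFour σ')
            (arcHead src tgt (e0, b)) (arcTail src tgt (e0, b))
        · rw [if_pos hc] at hmem
          exact absurd (congrArg Prod.fst hmem) he
        · rw [if_neg hc] at hmem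
          exact absurd hmem (Set.notMem_empty _)

end Aux6
section Aux7

variable {V : Type*} {E : Type*} [DecidableEq E]

open Classical in
lemma cycSet_ext_ncard [Fintype E] (src tgt : E → V) (A : Set (V × V)) (e0 : E) (b : Bool)
    (σ' : {e : E // e ≠ e0} → Bool) :
    (CycSet src tgt A ∅ (toFour (ext2 e0 b σ'))).ncard =
      (CycSet (rmap src e0) (rmap tgt e0) (addc (src e0) (tgt e0) A (oneWayFour b)) ∅
        (toFour σ')).ncard +
      (if reach (rmap src e0) (rmap tgt e0) (addc (src e0) (tgt e0) A (oneWayFour b)) ∅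
            (toFour σ') (arcHead src tgt (e0, b)) (arcTail src tgt (e0, b))
        then 1 else 0) := by
  have hinj : Function.Injective
      (fun a : {e : E // e ≠ e0} × Bool => ((a.1.1 : E), a.2)) := by
    rintro ⟨⟨a1, h1⟩, a2⟩ ⟨⟨b1, hb1⟩, b2⟩ h
    obtain ⟨h1', h2'⟩ : a1 = b1 ∧ a2 = b2 := Prod.mk.injEq .. ▸ h
    subst h1'; subst h2'; rfl
  rw [cycSet_ext]
  by_cases hc : reach (rmap src e0) (rmap tgt e0)
      (addc (src e0) (tgt e0) A (oneWayFour b)) ∅ (toFour σ')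
      (arcHead src tgt (e0, b)) (arcTail src tgt (e0, b))
  · rw [if_pos hc, if_pos hc]
    have hdisj : Disjoint
        ((fun a : {e : E // e ≠ e0} × Bool => ((a.1.1 : E), a.2)) ''
          CycSet (rmap src e0) (rmap tgt e0) (addc (src e0) (tgt e0) A (oneWayFour b)) ∅
            (toFour σ')) ({(e0, b)} : Set (E × Bool)) := by
      rw [Set.disjoint_singleton_right]
      rintro ⟨a', -, hpair⟩
      exact a'.1.2 (congrArg Prod.fst hpair)
    rw [Set.ncard_union_eq hdisj (Set.toFinite _) (Set.toFinite _),
      Set.ncard_image_of_injective _ hinj, Set.ncard_singleton]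
  · rw [if_neg hc, if_neg hc, Set.union_empty, Set.ncard_image_of_injective _ hinj, add_zero]

/-- Splitting a function type at one point. -/
def extEquiv (e0 : E) (β : Type*) : β × ({e : E // e ≠ e0} → β) ≃ (E → β) where
  toFun p := fun e => if h : e = e0 then p.1 else p.2 ⟨e, h⟩
  invFun φ := (φ e0, fun e => φ e.1)
  left_inv p := by
    cases p with | mk c g =>
    refine Prod.ext ?_ ?_
    · exact dif_pos rfl
    · funext e
      exact dif_neg e.2
  right_inv φ := by
    funext e
    by_cases h : e = e0
    · subst h; simp
    · simp [h]

lemma sum_ext4 [Fintype E] {M : Type*} [AddCommMonoid M] (e0 : E) (f : (E → Four) → M) :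
    ∑ φ : E → Four, f φ =
      ∑ c : Four, ∑ φ' : {e : E // e ≠ e0} → Four, f (ext4 e0 c φ') := by
  have h1 : (∑ φ : E → Four, f φ) =
      ∑ p : Four × ({e : E // e ≠ e0} → Four), f (ext4 e0 p.1 p.2) :=
    (Fintype.sum_equiv (extEquiv e0 Four) (fun p => f (ext4 e0 p.1 p.2)) f
      (fun p => rfl)).symm
  rw [h1, Fintype.sum_prod_type]

lemma sum_ext2 [Fintype E] {M : Type*} [AddCommMonoid M] (e0 : E) (f : (E → Bool) → M) :
    ∑ σ : E → Bool, f σ =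
      ∑ b : Bool, ∑ σ' : {e : E // e ≠ e0} → Bool, f (ext2 e0 b σ') := by
  have h1 : (∑ σ : E → Bool, f σ) =
      ∑ p : Bool × ({e : E // e ≠ e0} → Bool), f (ext2 e0 p.1 p.2) :=
    (Fintype.sum_equiv (extEquiv e0 Bool) (fun p => f (ext2 e0 p.1 p.2)) f
      (fun p => rfl)).symm
  rw [h1, Fintype.sum_prod_type]

end Aux7
section Aux8

variable {V : Type*} {E : Type*} [DecidableEq E]

lemma sum_four {M : Type*} [AddCommMonoid M] (g : Four → M) :
    ∑ c : Four, g c = g Four.zero + g Four.forward + g Four.backward + g Four.two := by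
  have h : (Finset.univ : Finset Four) =
      {Four.zero, Four.forward, Four.backward, Four.two} := by decide
  rw [h]
  rw [Finset.sum_insert (by decide), Finset.sum_insert (by decide),
    Finset.sum_insert (by decide), Finset.sum_singleton]
  rw [add_assoc, add_assoc]

lemma pcond_insert (src tgt : E → V) (A P : Set (V × V)) (q : V × V) (φ : E → Four) :
    Pcond src tgt A (insert q P) φ ↔
      (reach src tgt A ∅ φ q.1 q.2 ∧ Pcond src tgt A P φ) := by
  unfold Pcond
  exact Set.forall_mem_insert

lemma oneWayFour_true : oneWayFour true = Four.forward := rfl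
lemma oneWayFour_false : oneWayFour false = Four.backward := rfl
lemma arcHead_true (src tgt : E → V) (e0 : E) : arcHead src tgt (e0, true) = tgt e0 := rfl
lemma arcTail_true (src tgt : E → V) (e0 : E) : arcTail src tgt (e0, true) = src e0 := rfl
lemma arcHead_false (src tgt : E → V) (e0 : E) : arcHead src tgt (e0, false) = src e0 := rfl
lemma arcTail_false (src tgt : E → V) (e0 : E) : arcTail src tgt (e0, false) = tgt e0 := rfl

open Classical in
/-- One orientation's contribution splits off the edge `e0`. -/
lemma cycQ_ext [Fintype E] (src tgt : E → V) (A P : Set (V × V)) (e0 : E) (b : Bool)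
    (σ' : {e : E // e ≠ e0} → Bool) :
    cycQ src tgt A P (ext2 e0 b σ') =
      cycQ (rmap src e0) (rmap tgt e0) (addc (src e0) (tgt e0) A (oneWayFour b)) P σ' +
      cycQ (rmap src e0) (rmap tgt e0) (addc (src e0) (tgt e0) A (oneWayFour b))
        (insert (arcHead src tgt (e0, b), arcTail src tgt (e0, b)) P) σ' := by
  classical
  unfold cycQ
  rw [cycSet_ext_ncard src tgt A e0 b σ']
  set X := addc (src e0) (tgt e0) A (oneWayFour b) with hX
  set r := reach (rmap src e0) (rmap tgt e0) X ∅ (toFour σ')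
      (arcHead src tgt (e0, b)) (arcTail src tgt (e0, b)) with hr
  have hpc : Pcond src tgt A P (toFour (ext2 e0 b σ')) ↔
      Pcond (rmap src e0) (rmap tgt e0) X P (toFour σ') := by
    rw [toFour_ext2]
    exact Pcond_ext src tgt A P e0 (oneWayFour b) (toFour σ')
  have hpc2 : Pcond (rmap src e0) (rmap tgt e0) X
      (insert (arcHead src tgt (e0, b), arcTail src tgt (e0, b)) P) (toFour σ') ↔
      (r ∧ Pcond (rmap src e0) (rmap tgt e0) X P (toFour σ')) := by
    rw [pcond_insert]
  rw [if_congr hpc rfl rfl, if_congr hpc2 rfl rfl, pow_add]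
  by_cases h1 : r <;>
    by_cases h2 : Pcond (rmap src e0) (rmap tgt e0) X P (toFour σ') <;>
      simp [h1, h2] <;> ring

end Aux8
section Aux9

open Classical in
lemma key_count {V : Type*} (n : ℕ) :
    ∀ (E : Type*) [Fintype E] [DecidableEq E] (src tgt : E → V) (A P : Set (V × V)),
      Fintype.card E = n → (∀ p ∈ P, (p.2, p.1) ∈ A) →
      (∑ φ : E → Four, if TCp src tgt A φ ∧ Pcond src tgt A P φ then 1 else 0) =
        ∑ σ : E → Bool, cycQ src tgt A P σ := by
  induction n with
  | zero =>
    intro E _ _ src tgt A P hcard hP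
    haveI : IsEmpty E := Fintype.card_eq_zero_iff.mp hcard
    rw [Fintype.sum_unique, Fintype.sum_unique]
    unfold cycQ
    have hc : ∀ σ : E → Bool, CycSet src tgt A ∅ (toFour σ) = ∅ :=
      fun _ => Set.eq_empty_of_isEmpty _
    have hT : ∀ φ : E → Four, TCp src tgt A φ := fun _ a => (IsEmpty.false a.1).elim
    have hpq : ∀ (φ ψ : E → Four), Pcond src tgt A P φ ↔ Pcond src tgt A P ψ :=
      fun φ ψ => by rw [Subsingleton.elim φ ψ]
    rw [hc, Set.ncard_empty, pow_zero, one_mul]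
    simp only [hT, true_and]
    exact if_congr (hpq _ _) rfl rfl
  | succ n ih =>
    intro E _ _ src tgt A P hcard hP
    have hpos : 0 < Fintype.card E := by omega
    obtain ⟨e0⟩ : Nonempty E := Fintype.card_pos_iff.mp hpos
    have hcard' : Fintype.card {e : E // e ≠ e0} = n := by
      have h1 := Fintype.card_subtype_compl (fun e : E => e = e0)
      have h2 : Fintype.card {x : E // x = e0} = 1 := Fintype.card_subtype_eq e0
      have : Fintype.card {e : E // e ≠ e0} = Fintype.card E - 1 := by
        rw [h1, h2]
      omega
    set u := src e0 with hu
    set v := tgt e0 with hv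
    set src' := rmap src e0 with hsrc'
    set tgt' := rmap tgt e0 with htgt'
    -- abbreviations for the six sums over the smaller edge set
    set L : Set (V × V) → Set (V × V) → ℕ := fun X Q =>
      (∑ φ' : {e : E // e ≠ e0} → Four,
        if TCp src' tgt' X φ' ∧ Pcond src' tgt' X Q φ' then 1 else 0) with hL
    set R : Set (V × V) → Set (V × V) → ℕ := fun X Q =>
      (∑ σ' : {e : E // e ≠ e0} → Bool, cycQ src' tgt' X Q σ') with hR
    have hLR : ∀ (X Q : Set (V × V)), (∀ p ∈ Q, (p.2, p.1) ∈ X) → L X Q = R X Q :=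
      fun X Q hQ => ih _ src' tgt' X Q hcard' hQ
    -- Left-hand side
    rw [sum_ext4 e0, sum_ext2 e0, sum_four, Fintype.sum_bool]
    have hzero : (∑ φ' : {e : E // e ≠ e0} → Four,
        if TCp src tgt A (ext4 e0 Four.zero φ') ∧
          Pcond src tgt A P (ext4 e0 Four.zero φ') then 1 else 0) = L A P := by
      refine Finset.sum_congr rfl fun φ' _ => ?_
      refine if_congr (and_congr ?_ ?_) rfl rfl
      · exact TCp_ext_zero src tgt A e0 φ'
      · exact Pcond_ext src tgt A P e0 Four.zero φ'
    have htwo : (∑ φ' : {e : E // e ≠ e0} → Four,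
        if TCp src tgt A (ext4 e0 Four.two φ') ∧
          Pcond src tgt A P (ext4 e0 Four.two φ') then 1 else 0) =
        L (insert (u, v) (insert (v, u) A)) P := by
      refine Finset.sum_congr rfl fun φ' _ => ?_
      refine if_congr (and_congr ?_ ?_) rfl rfl
      · exact TCp_ext_two src tgt A e0 φ'
      · exact Pcond_ext src tgt A P e0 Four.two φ'
    have hfwd : (∑ φ' : {e : E // e ≠ e0} → Four,
        if TCp src tgt A (ext4 e0 Four.forward φ') ∧
          Pcond src tgt A P (ext4 e0 Four.forward φ') then 1 else 0) =
        L (insert (u, v) A) (insert (v, u) P) := by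
      refine Finset.sum_congr rfl fun φ' _ => ?_
      refine if_congr ?_ rfl rfl
      rw [and_congr (TCp_ext_forward src tgt A e0 φ')
        (Pcond_ext src tgt A P e0 Four.forward φ'),
        pcond_insert src' tgt' (insert (u, v) A) P (v, u) φ']
      constructor
      · rintro ⟨⟨h1, h2⟩, h3⟩
        exact ⟨h1, h2, h3⟩
      · rintro ⟨h1, h2, h3⟩
        exact ⟨⟨h1, h2⟩, h3⟩
    have hbwd : (∑ φ' : {e : E // e ≠ e0} → Four,
        if TCp src tgt A (ext4 e0 Four.backward φ') ∧
          Pcond src tgt A P (ext4 e0 Four.backward φ') then 1 else 0) =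
        L (insert (v, u) A) (insert (u, v) P) := by
      refine Finset.sum_congr rfl fun φ' _ => ?_
      refine if_congr ?_ rfl rfl
      rw [and_congr (TCp_ext_backward src tgt A e0 φ')
        (Pcond_ext src tgt A P e0 Four.backward φ'),
        pcond_insert src' tgt' (insert (v, u) A) P (u, v) φ']
      constructor
      · rintro ⟨⟨h1, h2⟩, h3⟩
        exact ⟨h1, h2, h3⟩
      · rintro ⟨h1, h2, h3⟩
        exact ⟨⟨h1, h2⟩, h3⟩
    rw [hzero, htwo, hfwd, hbwd]
    -- Right-hand side
    have hrt : (∑ σ' : {e : E // e ≠ e0} → Bool, cycQ src tgt A P (ext2 e0 true σ')) =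
        R (insert (u, v) A) P + R (insert (u, v) A) (insert (v, u) P) := by
      rw [← Finset.sum_add_distrib]
      exact Finset.sum_congr rfl fun σ' _ => cycQ_ext src tgt A P e0 true σ'
    have hrf : (∑ σ' : {e : E // e ≠ e0} → Bool, cycQ src tgt A P (ext2 e0 false σ')) =
        R (insert (v, u) A) P + R (insert (v, u) A) (insert (u, v) P) := by
      rw [← Finset.sum_add_distrib]
      exact Finset.sum_congr rfl fun σ' _ => cycQ_ext src tgt A P e0 false σ'
    rw [hrt, hrf]
    -- apply the induction hypothesis to the four left-hand sums
    have hP1 : ∀ p ∈ P, (p.2, p.1) ∈ insert (u, v) (insert (v, u) A) :=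
      fun p hp => Set.mem_insert_of_mem _ (Set.mem_insert_of_mem _ (hP p hp))
    have hP2 : ∀ p ∈ insert ((v : V), u) P, (p.2, p.1) ∈ insert (u, v) A := by
      rintro p (rfl | hp)
      · exact Set.mem_insert _ _
      · exact Set.mem_insert_of_mem _ (hP p hp)
    have hP3 : ∀ p ∈ insert ((u : V), v) P, (p.2, p.1) ∈ insert (v, u) A := by
      rintro p (rfl | hp)
      · exact Set.mem_insert _ _
      · exact Set.mem_insert_of_mem _ (hP p hp)
    rw [hLR A P hP, hLR _ _ hP1, hLR _ _ hP2, hLR _ _ hP3]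
    -- the exchange identity
    have hex : R A P + R (insert (u, v) (insert (v, u) A)) P =
        R (insert (u, v) A) P + R (insert (v, u) A) P := by
      rw [hR]
      simp only
      rw [← Finset.sum_add_distrib, ← Finset.sum_add_distrib]
      exact Finset.sum_congr rfl fun σ' _ => cycQ_exchange src' tgt' A P hP u v σ'
    omega

end Aux9

/-- The number of totally cyclic fourientations of a finite graph `G`
(fourientations all of whose 1-way edges are cyclic) equals `∑_α 2^{|Cyc(α)|}`, the sum being
over all orientations `α` of `G`. -/
theorem statement4 {V E : Type*} [Fintype V] [Fintype E] [DecidableEq E] (src tgt : E → V) :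
    Nat.card {φ : E → Four //
        ∀ a : E × Bool, oneWayArc φ a →
          reach src tgt ∅ ∅ φ (arcHead src tgt a) (arcTail src tgt a)} =
    ∑ σ : E → Bool, 2 ^ (CycSet src tgt ∅ ∅ (toFour σ)).ncard := by
  classical
  have hP0 : ∀ φ : E → Four, Pcond src tgt ∅ (∅ : Set (V × V)) φ :=
    fun φ p hp => absurd hp (Set.notMem_empty p)
  have hkey := key_count (V := V) (Fintype.card E) E src tgt ∅ ∅ rfl
    (fun p hp => absurd hp (Set.notMem_empty p))
  rw [Nat.card_eq_fintype_card, Fintype.card_subtype, Finset.card_filter]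
  have h1 : (∑ φ : E → Four, if (∀ a : E × Bool, oneWayArc φ a →
        reach src tgt ∅ ∅ φ (arcHead src tgt a) (arcTail src tgt a)) then 1 else 0) =
      ∑ φ : E → Four, if TCp src tgt ∅ φ ∧ Pcond src tgt ∅ (∅ : Set (V × V)) φ
        then 1 else 0 := by
    refine Finset.sum_congr rfl fun φ _ => ?_
    refine if_congr ?_ rfl rfl
    unfold TCp
    simp [hP0 φ]
  rw [h1, hkey]
  refine Finset.sum_congr rfl fun σ _ => ?_
  unfold cycQ
  simp [hP0 (toFour σ)]
end SubgraphsVsOrientations
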